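/- Piecewise linear interpolation error of the exponential: Let t > 0, let g(x) = exp(x) on [−t·log 2, 0], let Δ ∈ (0, 1/2] be the spacing of an equidistant grid of knots on [−t·log 2, 0], and let g_N be the piecewise linear interpolant of g at these knots. Then sup_{x ∈ [−t·log 2, 0]} | g(x) − g_N(x) | = exp(−Δ) + m·(log m + Δ) − m, where m = (1 − exp(−Δ))/Δ, and this quantity is at most Δ²/8. -/

import Mathlib

noncomputable section

/-- The piecewise linear interpolant of `g` on the equidistant grid
`{a + iΔ : i ∈ ℤ}`: it agrees with `g` at every knot and is affine on each
interval between consecutive knots. -/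
def pwlInterp (g : ℝ → ℝ) (a Δ : ℝ) (x : ℝ) : ℝ :=
  g (a + ⌊(x - a) / Δ⌋ * Δ) +
    ((x - a) / Δ - ⌊(x - a) / Δ⌋) *
      (g (a + (⌊(x - a) / Δ⌋ + 1) * Δ) - g (a + ⌊(x - a) / Δ⌋ * Δ))

open Real in
lemma exp_poly_lb (x : ℝ) (hx : 0 ≤ x) :
    1 + x + x^2/2 + x^3/6 + x^4/24 ≤ Real.exp x := by
  have h := Real.sum_le_exp_of_nonneg hx 5
  simp [Finset.sum_range_succ, Nat.factorial] at h
  nlinarith [h]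

lemma exp_neg_ub_aux (x P Q : ℝ) (hP : P ≤ Real.exp x) (hPpos : 0 < P)
    (hprod : 1 ≤ P * Q) : Real.exp (-x) ≤ Q := by
  have h1 : Real.exp (-x) * P ≤ 1 := by
    have := mul_le_mul_of_nonneg_left hP (le_of_lt (Real.exp_pos (-x)))
    rwa [← Real.exp_add, neg_add_cancel, Real.exp_zero] at this
  nlinarith [Real.exp_pos (-x)]

lemma exp_neg_quartic_ub (x : ℝ) (hx : 0 ≤ x) :
    Real.exp (-x) ≤ 1 - x + x^2/2 - x^3/6 + x^4/24 := by
  refine exp_neg_ub_aux x _ _ (exp_poly_lb x hx) (by positivity) ?_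
  nlinarith [pow_nonneg hx 6, pow_nonneg hx 8]

lemma exp_neg_quad_ub (x : ℝ) (hx : 0 ≤ x) :
    Real.exp (-x) ≤ 1 - x + x^2/2 := by
  refine exp_neg_ub_aux x (1 + x + x^2/2) _ ?_ (by positivity) ?_
  · nlinarith [exp_poly_lb x hx, pow_nonneg hx 3, pow_nonneg hx 4]
  · nlinarith [pow_nonneg hx 4]


open Real in
lemma log_quad_ub {y : ℝ} (h0 : 1/2 ≤ y) (h1 : y ≤ 1) :
    Real.log y ≤ y - 1 - (1 - y)^2 / 2 := by
  set F : ℝ → ℝ := fun y => y - 1 - (1-y)^2/2 - Real.log y with hF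
  have hder : ∀ z ∈ Set.Ioo (1/2:ℝ) 1, HasDerivAt F (1 - (2*(1-z)^1*(-1))/2 - z⁻¹) z := by
    intro z hz
    have hz0 : z ≠ 0 := by have := hz.1; positivity
    exact (((hasDerivAt_id z).sub_const 1).sub
      ((((hasDerivAt_id z).const_sub 1).pow 2).div_const 2)).sub (Real.hasDerivAt_log hz0)
  have hc : ContinuousOn F (Set.Icc (1/2:ℝ) 1) := by
    apply ContinuousOn.sub
    · fun_prop
    · apply Real.continuousOn_log.mono
      intro z hz
      simp only [Set.mem_compl_iff, Set.mem_singleton_iff]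
      have := hz.1; intro h; rw [h] at this; linarith
  have hanti : AntitoneOn F (Set.Icc (1/2:ℝ) 1) := by
    apply antitoneOn_of_deriv_nonpos (convex_Icc _ _) hc
    · intro z hz
      rw [interior_Icc] at hz
      exact (hder z hz).differentiableAt.differentiableWithinAt
    · intro z hz
      rw [interior_Icc] at hz
      rw [(hder z hz).deriv]
      have hz0 : 0 < z := by linarith [hz.1]
      rw [sub_nonpos, inv_eq_one_div, le_div_iff₀ hz0]
      nlinarith [sq_nonneg (1 - z)]
  have := hanti (Set.mem_Icc.2 ⟨h0, h1⟩) (Set.mem_Icc.2 ⟨by norm_num, le_refl 1⟩) h1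
  simp [hF, Real.log_one] at this
  linarith [this]

open Real in
lemma pwl_formula (a Δ x : ℝ) :
    pwlInterp Real.exp a Δ x = Real.exp (a + ⌊(x-a)/Δ⌋*Δ) *
      (1 + ((x-a)/Δ - ⌊(x-a)/Δ⌋) * (Real.exp Δ - 1)) := by
  unfold pwlInterp
  rw [show a + ((⌊(x-a)/Δ⌋:ℝ)+1)*Δ = (a + (⌊(x-a)/Δ⌋:ℝ)*Δ) + Δ by ring]
  simp only [Real.exp_add]
  ring



set_option maxHeartbeats 1000000 in
open Real in
/-- **Piecewise linear interpolation error of the exponential.**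
For `g(x) = exp(x)` on `[−t log 2, 0]` and an equidistant grid of spacing
`Δ ∈ (0, 1/2]` (with `t log 2 = N Δ` for some `N ≥ 1`), the supremum of the
interpolation error equals `exp(−Δ) + m(log m + Δ) − m`, where
`m = (1 − exp(−Δ))/Δ`, and this quantity is at most `Δ²/8`. -/
theorem pwl_interp_error_exp (t Δ : ℝ) (ht : 0 < t)
    (hΔ : 0 < Δ) (hΔ' : Δ ≤ 1 / 2)
    (hgrid : ∃ N : ℕ, 1 ≤ N ∧ t * Real.log 2 = N * Δ)
    (m : ℝ) (hm : m = (1 - Real.exp (-Δ)) / Δ) :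
    sSup ((fun x => |Real.exp x - pwlInterp Real.exp (-(t * Real.log 2)) Δ x|) ''
        Set.Icc (-(t * Real.log 2)) 0)
      = Real.exp (-Δ) + m * (Real.log m + Δ) - m ∧
    Real.exp (-Δ) + m * (Real.log m + Δ) - m ≤ Δ ^ 2 / 8 := by
  constructor
  ·
    obtain ⟨N, hN1, hNΔ⟩ := hgrid
    obtain ⟨a, ha⟩ : ∃ a, a = -(t * Real.log 2) := ⟨_, rfl⟩
    rw [← ha]
    have hΔ0 : Δ ≠ 0 := ne_of_gt hΔ
    have haN : a = -(N * Δ) := by rw [ha, hNΔ]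
    obtain ⟨M, hM⟩ : ∃ M, M = (Real.exp Δ - 1)/Δ := ⟨_, rfl⟩
    have hM1 : 1 < M := by
      rw [hM, lt_div_iff₀ hΔ]
      linarith [Real.add_one_lt_exp hΔ0]
    have hMpos : 0 < M := lt_trans one_pos hM1
    have hee : Real.exp (-Δ) * Real.exp Δ = 1 := by rw [← Real.exp_add]; simp
    have hMe : M < Real.exp Δ := by
      rw [hM, div_lt_iff₀ hΔ]
      nlinarith [Real.add_one_lt_exp (neg_ne_zero.2 hΔ0), Real.exp_pos Δ]
    have hlogM0 : 0 < Real.log M := Real.log_pos hM1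
    have hlogMΔ : Real.log M < Δ := by
      have h := Real.log_lt_log hMpos hMe
      rwa [Real.log_exp] at h
    have hMd : M * Δ = Real.exp Δ - 1 := by rw [hM]; field_simp
    have hmM : m = Real.exp (-Δ) * M := by
      rw [hm, hM, ← mul_div_assoc, mul_sub, mul_one, hee]
    have hlogm : Real.log m = -Δ + Real.log M := by
      rw [hmM, Real.log_mul (Real.exp_ne_zero _) (ne_of_gt hMpos), Real.log_exp]
    have hE0 : 0 ≤ 1 - M + M * Real.log M := by
      have h1 := Real.log_le_sub_one_of_pos (inv_pos.2 hMpos)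
      rw [Real.log_inv] at h1
      have h2 : M * M⁻¹ = 1 := mul_inv_cancel₀ (ne_of_gt hMpos)
      nlinarith
    have hVeq : Real.exp (-Δ) + m * (Real.log m + Δ) - m
        = Real.exp (-Δ) * (1 - M + M * Real.log M) := by
      rw [hlogm, hmM]; ring
    rw [hVeq]
    -- pointwise analysis
    have hpt : ∀ x ∈ Set.Icc a 0, Real.exp x ≤ pwlInterp Real.exp a Δ x ∧
        pwlInterp Real.exp a Δ x - Real.exp x ≤ Real.exp (-Δ) * (1 - M + M * Real.log M) := by
      intro x hx
      obtain ⟨k, hk⟩ : ∃ k : ℤ, k = ⌊(x - a)/Δ⌋ := ⟨_, rfl⟩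
      obtain ⟨θ, hθdef⟩ : ∃ θ : ℝ, θ = (x - a)/Δ - k := ⟨_, rfl⟩
      have hθ0 : 0 ≤ θ := by
        rw [hθdef, hk]; exact sub_nonneg.2 (Int.floor_le _)
      have hθ1 : θ < 1 := by
        rw [hθdef, hk]; linarith [Int.lt_floor_add_one ((x - a)/Δ)]
      have hxdec : x = (a + k*Δ) + θ*Δ := by
        rw [hθdef]; field_simp; ring
      have hpwl : pwlInterp Real.exp a Δ x = Real.exp (a + k*Δ) * (1 + θ * (Real.exp Δ - 1)) := by
        rw [pwl_formula, ← hk, ← hθdef]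
      have hexpx : Real.exp x = Real.exp (a + k*Δ) * Real.exp (θ*Δ) := by
        rw [← Real.exp_add, ← hxdec]
      have hL1 : Real.exp (θ*Δ) ≤ 1 + θ*(Real.exp Δ - 1) := by
        have hc := convexOn_exp.2 (Set.mem_univ (0:ℝ)) (Set.mem_univ Δ)
          (by linarith : (0:ℝ) ≤ 1-θ) hθ0 (by ring)
        simp only [smul_eq_mul, mul_zero, zero_add, Real.exp_zero, mul_one] at hc
        linarith
      have hL2 : 1 + θ*(Real.exp Δ - 1) - Real.exp (θ*Δ) ≤ 1 - M + M * Real.log M := by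
        have h := Real.add_one_le_exp (θ*Δ - Real.log M)
        have he : Real.exp (θ*Δ - Real.log M) = Real.exp (θ*Δ) / M := by
          rw [Real.exp_sub, Real.exp_log hMpos]
        rw [he, le_div_iff₀ hMpos] at h
        have hsub : θ*(Real.exp Δ - 1) = θ*Δ*M := by rw [← hMd]; ring
        rw [hsub]
        nlinarith
      constructor
      · rw [hpwl, hexpx]
        have := Real.exp_pos (a + k*Δ)
        nlinarith
      · rw [hpwl, hexpx]
        rcases lt_or_eq_of_le hx.2 with hx0 | hx0
        · have hkN : k < (N:ℤ) := by
            rw [hk]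
            apply Int.floor_lt.2
            push_cast
            rw [div_lt_iff₀ hΔ]
            rw [haN]; linarith
          have hkN' : (k:ℝ) ≤ (N:ℝ) - 1 := by
            have h2 : (k:ℝ) + 1 ≤ (N:ℝ) := by exact_mod_cast Int.add_one_le_iff.2 hkN
            linarith
          have hcle : Real.exp (a + k*Δ) ≤ Real.exp (-Δ) := by
            apply Real.exp_le_exp.2
            rw [haN]
            nlinarith [mul_le_mul_of_nonneg_right hkN' hΔ.le]
          have hfnn : 0 ≤ 1 + θ*(Real.exp Δ - 1) - Real.exp (θ*Δ) := by linarith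
          have hmain : Real.exp (a + k*Δ) * (1 + θ*(Real.exp Δ - 1) - Real.exp (θ*Δ))
              ≤ Real.exp (-Δ) * (1 - M + M * Real.log M) :=
            mul_le_mul hcle hL2 hfnn (Real.exp_pos _).le
          nlinarith [hmain]
        · have hfr : (x - a)/Δ = ((N:ℤ):ℝ) := by
            rw [hx0, haN]; push_cast; field_simp; ring
          have hθz : θ = 0 := by
            rw [hθdef, hfr, hk, hfr, Int.floor_intCast]; simp
          rw [hθz]
          simp only [zero_mul, mul_zero, add_zero, Real.exp_zero, mul_one]
          have := Real.exp_pos (-Δ)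
          nlinarith
    apply IsGreatest.csSup_eq
    constructor
    · -- membership: attained at x* = -Δ + log M
      refine ⟨-Δ + Real.log M, ?_, ?_⟩
      · constructor
        · rw [haN]
          have h1 : (1:ℝ) ≤ (N:ℝ) := by exact_mod_cast hN1
          nlinarith
        · linarith
      · have hfr : ((-Δ + Real.log M) - a)/Δ = ((N:ℤ) - 1 : ℤ) + Real.log M / Δ := by
          rw [haN]; push_cast; field_simp; ring
        have hfl : ⌊((-Δ + Real.log M) - a)/Δ⌋ = (N:ℤ) - 1 := by
          rw [hfr, Int.floor_intCast_add]
          have h0 : ⌊Real.log M / Δ⌋ = 0 := by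
            apply Int.floor_eq_zero_iff.2
            constructor
            · positivity
            · rw [div_lt_one hΔ]; exact hlogMΔ
          omega
        show |Real.exp (-Δ + Real.log M) - pwlInterp Real.exp a Δ (-Δ + Real.log M)|
          = Real.exp (-Δ) * (1 - M + M * Real.log M)
        rw [pwl_formula, hfl, hfr]
        have hc1 : a + (((N:ℤ) - 1 : ℤ):ℝ) * Δ = -Δ := by rw [haN]; push_cast; ring
        rw [hc1]
        have hθv : (((N:ℤ) - 1 : ℤ):ℝ) + Real.log M / Δ - (((N:ℤ) - 1 : ℤ):ℝ) = Real.log M / Δ := by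
          ring
        rw [hθv]
        have habs : Real.exp (-Δ + Real.log M) = Real.exp (-Δ) * M := by
          rw [Real.exp_add, Real.exp_log hMpos]
        rw [habs]
        have h1 : Real.log M / Δ * (Real.exp Δ - 1) = M * Real.log M := by
          rw [← hMd]; field_simp
        rw [h1, abs_of_nonpos]
        · ring
        · nlinarith [Real.exp_pos (-Δ), Real.log_le_sub_one_of_pos hMpos]
    · rintro v ⟨x, hx, rfl⟩
      obtain ⟨h1, h2⟩ := hpt x hx
      show |Real.exp x - pwlInterp Real.exp a Δ x| ≤ _
      rw [abs_sub_comm, abs_of_nonneg (by linarith)]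
      exact h2
  ·
    have hmΔ : m * Δ = 1 - Real.exp (-Δ) := by rw [hm]; field_simp
    have hV : Real.exp (-Δ) + m*(Real.log m + Δ) - m = 1 - m + m*Real.log m := by
      linear_combination hmΔ
    rw [hV]
    have hq := exp_neg_quad_ub Δ hΔ.le
    have hq4 := exp_neg_quartic_ub Δ hΔ.le
    have hm1 : m ≤ 1 := by nlinarith [Real.add_one_le_exp (-Δ)]
    have hm2 : 1/2 ≤ m := by nlinarith
    have hs : 1 - m ≤ Δ/2 - Δ^2/6 + Δ^3/24 := by nlinarith
    have hs0 : 0 ≤ 1 - m := by linarith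
    have hp := mul_le_mul_of_nonneg_left (log_quad_ub hm2 hm1) (by linarith : (0:ℝ) ≤ m)
    have h2 : 1 - m + m*Real.log m ≤ (1-m)^2/2 + (1-m)^3/2 := by nlinarith [hp]
    have hB0 : 0 ≤ Δ/2 - Δ^2/6 + Δ^3/24 := by nlinarith
    have h4 : (Δ/2 - Δ^2/6 + Δ^3/24)^2/2 + (Δ/2 - Δ^2/6 + Δ^3/24)^3/2 ≤ Δ^2/8 := by
      nlinarith [hΔ.le, hΔ', sq_nonneg Δ, pow_nonneg hΔ.le 3, pow_nonneg hΔ.le 4,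
        pow_nonneg hΔ.le 5, pow_nonneg hΔ.le 6, pow_nonneg hΔ.le 7,
        mul_le_mul hΔ' hΔ' hΔ.le (by norm_num : (0:ℝ) ≤ 1/2),
        mul_le_of_le_one_left hΔ.le (by linarith : Δ ≤ 1)]
    have hsq := mul_le_mul hs hs hs0 hB0
    have hcu := mul_le_mul hsq hs hs0 (by positivity)
    nlinarith [hsq, hcu, h2, h4]

end
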